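/- Let J_λ[P_n](t) = ∫_{-1}^{1} e^{-(t-x)²/λ²} P_n(x) dx, where P_n is the Legendre polynomial of degree n and λ > 0. Then for n ≥ 1, ((n+2)/(2n+3)) J_λ[P_{n+2}](t) = t(J_λ[P_{n+1}](t) − J_λ[P_{n-1}](t)) + ((n−1)/(2n−1)) J_λ[P_{n-2}](t) + (2n+1)(λ²/2 + 1/((2n+3)(2n−1))) J_λ[P_n](t). -/

import Mathlib

set_option maxHeartbeats 1000000

/-- The Legendre polynomial of degree `n`, via the Rodrigues formula. -/
noncomputable def legendreP (n : ℕ) (x : ℝ) : ℝ :=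
  (1 / (2 ^ n * (n.factorial : ℝ))) * iteratedDeriv n (fun y : ℝ => (y ^ 2 - 1) ^ n) x

/-- Gaussian convolution of the Legendre polynomial on `[-1,1]`. -/
noncomputable def Jlam (lam : ℝ) (n : ℕ) (t : ℝ) : ℝ :=
  ∫ x in (-1 : ℝ)..1, Real.exp (-(t - x) ^ 2 / lam ^ 2) * legendreP n x

open Polynomial

noncomputable def fpol (n : ℕ) : ℝ[X] := ((X : ℝ[X]) ^ 2 - 1) ^ n

lemma hdsq : derivative ((X : ℝ[X]) ^ 2 - 1) = 2 * X := by
  simp [derivative_X_pow, map_ofNat, one_add_one_eq_two]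

lemma iterX' (n : ℕ) (q : ℝ[X]) :
    derivative^[n+1] (X * q) = X * derivative^[n+1] q + ((n+1 : ℕ) : ℝ[X]) * derivative^[n] q := by
  induction n generalizing q with
  | zero => simp [derivative_mul]; ring
  | succ n ih =>
      rw [Function.iterate_succ_apply' derivative (n+1) (X*q), ih, derivative_add,
        derivative_mul, derivative_X, derivative_mul, derivative_natCast,
        ← Function.iterate_succ_apply' derivative (n+1) q,
        ← Function.iterate_succ_apply' derivative n q]
      push_cast
      ring

lemma iterX_all (n : ℕ) (q : ℝ[X]) :
    derivative^[n] (X * q) = X * derivative^[n] q + ((n : ℕ) : ℝ[X]) * derivative^[n-1] q := by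
  cases n with
  | zero => simp
  | succ n => simpa using iterX' n q

lemma deriv_iter_pred (n : ℕ) (c : ℝ[X]) (q : ℝ[X]) :
    (c * (n : ℝ[X])) * derivative (derivative^[n-1] q) = (c * (n : ℝ[X])) * derivative^[n] q := by
  cases n with
  | zero => simp
  | succ n =>
      simp only [Nat.add_sub_cancel, ← Function.iterate_succ_apply' derivative n q]

lemma iterSq (n : ℕ) (q : ℝ[X]) :
    derivative^[n+1] (((X : ℝ[X])^2 - 1) * q)
      = ((X : ℝ[X])^2 - 1) * derivative^[n+1] q
        + ((2*n+2 : ℕ) : ℝ[X]) * (X * derivative^[n] q)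
        + (((n+1)*n : ℕ) : ℝ[X]) * derivative^[n-1] q := by
  induction n generalizing q with
  | zero =>
      simp only [zero_add, Function.iterate_one, Function.iterate_zero, id_eq]
      rw [derivative_mul, hdsq]
      push_cast
      ring
  | succ n ih =>
      rw [Function.iterate_succ_apply' derivative (n+1) _, ih]
      simp only [derivative_add, derivative_mul, derivative_natCast, hdsq, derivative_X,
        zero_mul, one_mul, zero_add,
        ← Function.iterate_succ_apply' derivative (n+1) q,
        ← Function.iterate_succ_apply' derivative n q,
        Nat.add_sub_cancel]
      have h := deriv_iter_pred n (((n+1 : ℕ)) : ℝ[X]) q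
      push_cast at h ⊢
      linear_combination h

lemma iterConst (k c : ℕ) (q : ℝ[X]) :
    derivative^[k] (((c : ℕ) : ℝ[X]) * q) = ((c : ℕ) : ℝ[X]) * derivative^[k] q := by
  induction k generalizing q with
  | zero => simp
  | succ k ih =>
      rw [Function.iterate_succ_apply, Function.iterate_succ_apply, derivative_mul,
        derivative_natCast, zero_mul, zero_add, ih]

lemma fpol_succ (n : ℕ) : fpol (n+1) = ((X : ℝ[X])^2 - 1) * fpol n := by
  rw [fpol, fpol, pow_succ]; ring

lemma hdf (n : ℕ) : derivative (fpol (n+1)) = ((2*n+2 : ℕ) : ℝ[X]) * (X * fpol n) := by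
  rw [fpol, derivative_pow, hdsq, fpol]
  rw [Polynomial.C_eq_natCast]
  simp only [Nat.add_sub_cancel]
  push_cast
  ring

lemma iter_pred_deriv (m : ℕ) (c : ℝ[X]) (q : ℝ[X]) :
    (c * (m : ℝ[X])) * derivative^[m-1] (derivative q) = (c * (m : ℝ[X])) * derivative^[m] q := by
  cases m with
  | zero => simp
  | succ m =>
      simp only [Nat.add_sub_cancel, ← Function.iterate_succ_apply derivative m q]

lemma key (m : ℕ) :
    ((X : ℝ[X])^2 - 1) * derivative^[m+2] (fpol (m+1))
      = (((m+1)*(m+2) : ℕ) : ℝ[X]) * derivative^[m] (fpol (m+1)) := by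
  have h0 : ((X : ℝ[X])^2 - 1) * derivative (fpol (m+1))
      = ((2*m+2 : ℕ) : ℝ[X]) * (X * fpol (m+1)) := by
    rw [hdf m, fpol_succ m]; ring
  have h1 := congrArg (fun p => derivative^[m+1] p) h0
  rw [iterSq m (derivative (fpol (m+1))), iterConst (m+1) (2*m+2) (X * fpol (m+1)),
    iterX' m (fpol (m+1))] at h1
  rw [← Function.iterate_succ_apply derivative (m+1) (fpol (m+1)),
    ← Function.iterate_succ_apply derivative m (fpol (m+1))] at h1
  have h2 := iter_pred_deriv m (((m+1 : ℕ)) : ℝ[X]) (fpol (m+1))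
  push_cast at h1 h2 ⊢
  linear_combination h1 - h2

lemma rod1 (n : ℕ) :
    derivative^[n+1] (fpol (n+1))
      = ((2*n+2 : ℕ) : ℝ[X]) * (X * derivative^[n] (fpol n) + ((n : ℕ) : ℝ[X]) * derivative^[n-1] (fpol n)) := by
  rw [Function.iterate_succ_apply derivative n (fpol (n+1)), hdf n,
    iterConst n (2*n+2) (X * fpol n), iterX_all n (fpol n)]

lemma rod2 (n : ℕ) :
    derivative^[n+2] (fpol (n+1))
      = ((2*n+2 : ℕ) : ℝ[X]) * (X * derivative^[n+1] (fpol n) + ((n+1 : ℕ) : ℝ[X]) * derivative^[n] (fpol n)) := by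
  rw [show n+2 = (n+1)+1 from rfl, Function.iterate_succ_apply derivative (n+1) (fpol (n+1)),
    hdf n, iterConst (n+1) (2*n+2) (X * fpol n), iterX' n (fpol n)]

noncomputable def cst (n : ℕ) : ℝ := 1 / (2 ^ n * (n.factorial : ℝ))

noncomputable def Lp (n : ℕ) : ℝ[X] := C (cst n) * derivative^[n] (fpol n)

lemma hCC (n : ℕ) : (C (cst (n+1)) : ℝ[X]) * ((2*n+2 : ℕ) : ℝ[X]) = C (cst n) := by
  rw [← Polynomial.C_eq_natCast, ← C_mul]
  congr 1
  have h2 : (2 : ℝ) ^ (n+1) = 2 * 2 ^ n := by ring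
  rw [cst, cst, Nat.factorial_succ, h2]
  have hf : ((n.factorial : ℝ)) ≠ 0 := Nat.cast_ne_zero.mpr n.factorial_ne_zero
  have hp : (2 : ℝ) ^ n ≠ 0 := by positivity
  field_simp
  push_cast
  ring

lemma Lp0 : Lp 0 = 1 := by simp [Lp, cst, fpol]

lemma Lp1 : Lp 1 = X := by
  have : derivative^[1] (fpol 1) = 2 * X := by
    simp only [Function.iterate_one, fpol, pow_one, hdsq]
  rw [Lp, this, cst]
  norm_num
  rw [show ((2:ℝ[X])) = C 2 by simp [map_ofNat], ← mul_assoc, ← C_mul]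
  norm_num

lemma lpI (n : ℕ) :
    derivative (Lp (n+1)) = X * derivative (Lp n) + ((n : ℝ[X]) + 1) * Lp n := by
  have hd : derivative (Lp (n+1)) = C (cst (n+1)) * derivative^[n+2] (fpol (n+1)) := by
    rw [Lp, derivative_mul, derivative_C, zero_mul, zero_add,
      ← Function.iterate_succ_apply' derivative (n+1) (fpol (n+1))]
  have hdn : derivative (Lp n) = C (cst n) * derivative^[n+1] (fpol n) := by
    rw [Lp, derivative_mul, derivative_C, zero_mul, zero_add,
      ← Function.iterate_succ_apply' derivative n (fpol n)]
  rw [hd, hdn, rod2 n, Lp]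
  have h := hCC n
  push_cast at h ⊢
  linear_combination (X * derivative^[n+1] (fpol n) + ((n:ℝ[X])+1) * derivative^[n] (fpol n)) * h

lemma lpIII (n : ℕ) :
    ((n : ℝ[X]) + 1) * Lp (n+1)
      = ((n : ℝ[X]) + 1) * (X * Lp n) + ((X : ℝ[X])^2 - 1) * derivative (Lp n) := by
  cases n with
  | zero => simp [Lp0, Lp1]
  | succ m =>
      have hd : derivative (Lp (m+1)) = C (cst (m+1)) * derivative^[m+2] (fpol (m+1)) := by
        rw [Lp, derivative_mul, derivative_C, zero_mul, zero_add,
          ← Function.iterate_succ_apply' derivative (m+1) (fpol (m+1))]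
      rw [hd]
      simp only [Lp]
      rw [rod1 (m+1)]
      simp only [Nat.add_sub_cancel]
      have h1 := hCC (m+1)
      have h2 := key m
      push_cast at h1 h2 ⊢
      linear_combination (((m:ℝ[X])+2) * (X * derivative^[m+1] (fpol (m+1))
        + ((m:ℝ[X])+1) * derivative^[m] (fpol (m+1)))) * h1 - C (cst (m+1)) * h2

lemma lpIV (n : ℕ) :
    ((X : ℝ[X])^2 - 1) * derivative (Lp (n+1)) = ((n : ℝ[X]) + 1) * (X * Lp (n+1) - Lp n) := by
  linear_combination ((X:ℝ[X])^2 - 1) * lpI n - X * lpIII n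

lemma lpA (n : ℕ) :
    ((n : ℝ[X]) + 2) * Lp (n+2) = (2*(n : ℝ[X]) + 3) * (X * Lp (n+1)) - ((n : ℝ[X]) + 1) * Lp n := by
  have h1 := lpIII (n+1)
  have h2 := lpIV n
  push_cast at h1 h2 ⊢
  linear_combination h1 + h2

lemma natX_ne (n : ℕ) : ((n : ℝ[X]) + 1) ≠ 0 := by
  have : (((n+1 : ℕ)) : ℝ[X]) ≠ 0 := Nat.cast_ne_zero.mpr (Nat.succ_ne_zero n)
  push_cast at this
  exact this

lemma lpII (n : ℕ) :
    derivative (Lp n) = X * derivative (Lp (n+1)) - ((n : ℝ[X]) + 1) * Lp (n+1) := by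
  apply mul_left_cancel₀ (natX_ne n)
  have hdA := congrArg derivative (lpA n)
  simp only [derivative_mul, derivative_sub, derivative_add, derivative_natCast,
    derivative_ofNat, derivative_one, derivative_X, zero_mul, zero_add, mul_one, add_zero, one_mul,
    mul_zero] at hdA
  have h1 := lpI (n+1)
  push_cast at hdA h1 ⊢
  linear_combination hdA - ((n:ℝ[X])+2) * h1

lemma lpB (m : ℕ) :
    derivative (Lp (m+2)) - derivative (Lp m) = (2*(m : ℝ[X]) + 3) * Lp (m+1) := by
  have h1 := lpI (m+1)
  have h2 := lpII m
  push_cast at h1 h2 ⊢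
  linear_combination h1 - h2

lemma lpeval1 (n : ℕ) : (Lp n).eval 1 = 1 := by
  induction n using Nat.twoStepInduction with
  | zero => simp [Lp0]
  | one => simp [Lp1]
  | more n ih1 ih2 =>
      have h := congrArg (eval 1) (lpA n)
      simp only [eval_mul, eval_add, eval_sub, eval_natCast, eval_ofNat, eval_X, eval_one,
        ih1, ih2, mul_one, one_mul] at h
      have hn2 : ((n:ℝ) + 2) ≠ 0 := by positivity
      apply mul_left_cancel₀ hn2
      rw [h]; push_cast; ring

lemma lpevalm1 (n : ℕ) : (Lp n).eval (-1) = (-1)^n := by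
  induction n using Nat.twoStepInduction with
  | zero => simp [Lp0]
  | one => simp [Lp1]
  | more n ih1 ih2 =>
      have h := congrArg (eval (-1)) (lpA n)
      simp only [eval_mul, eval_add, eval_sub, eval_natCast, eval_ofNat, eval_X, eval_one,
        ih1, ih2] at h
      have hn2 : ((n:ℝ) + 2) ≠ 0 := by positivity
      apply mul_left_cancel₀ hn2
      rw [h]
      rw [show n+2 = n+1+1 from rfl, pow_succ, pow_succ]
      push_cast; ring

lemma iter_deriv_poly (k : ℕ) (p : ℝ[X]) :
    iteratedDeriv k (fun y : ℝ => eval y p) = fun x => eval x (derivative^[k] p) := by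
  induction k with
  | zero => simp
  | succ k ih =>
      rw [iteratedDeriv_succ, ih]
      funext x
      rw [Polynomial.deriv, ← Function.iterate_succ_apply' derivative k p]

lemma legendre_eval (n : ℕ) (x : ℝ) : legendreP n x = eval x (Lp n) := by
  have h1 : (fun y : ℝ => (y^2 - 1)^n) = fun y => eval y (fpol n) := by
    funext y; simp [fpol]
  rw [legendreP, h1, iter_deriv_poly n (fpol n), Lp, eval_mul, eval_C, cst]

noncomputable def Jp (lam t : ℝ) (p : ℝ[X]) : ℝ :=
  ∫ x in (-1 : ℝ)..1, Real.exp (-(t - x) ^ 2 / lam ^ 2) * eval x p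

lemma contJ (lam t c : ℝ) (p : ℝ[X]) :
    Continuous (fun x : ℝ => c * (Real.exp (-(t - x) ^ 2 / lam ^ 2) * eval x p)) := by
  apply continuous_const.mul
  apply Continuous.mul _ p.continuous
  fun_prop

lemma intJ (lam t c : ℝ) (p : ℝ[X]) :
    IntervalIntegrable (fun x : ℝ => c * (Real.exp (-(t - x) ^ 2 / lam ^ 2) * eval x p))
      MeasureTheory.volume (-1) 1 :=
  (contJ lam t c p).intervalIntegrable _ _

lemma Jlam_eq_Jp (lam t : ℝ) (n : ℕ) : Jlam lam n t = Jp lam t (Lp n) := by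
  rw [Jlam, Jp]
  apply intervalIntegral.integral_congr
  intro x _
  simp only [legendre_eval]

lemma exp_hasDeriv (lam t x : ℝ) :
    HasDerivAt (fun x : ℝ => Real.exp (-(t - x)^2 / lam^2))
      ((2*(t-x)/lam^2) * Real.exp (-(t - x)^2 / lam^2)) x := by
  have h1 : HasDerivAt (fun x : ℝ => -(t - x)^2 / lam^2) (2*(t-x)/lam^2) x := by
    have h2 : HasDerivAt (fun x : ℝ => t - x) (-1) x := by
      simpa using (hasDerivAt_id x).const_sub t
    have h3 := (h2.pow 2).neg.div_const (lam^2)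
    refine h3.congr_deriv ?_
    rw [show (2:ℕ)-1 = 1 from rfl]
    push_cast
    ring
  simpa [mul_comm] using h1.exp

lemma Jp_deriv (lam t : ℝ) (p : ℝ[X]) :
    Jp lam t (derivative p)
      = Real.exp (-(t - 1)^2 / lam^2) * eval 1 p
        - Real.exp (-(t + 1)^2 / lam^2) * eval (-1) p
        - (2/lam^2) * (t * Jp lam t p - Jp lam t (X * p)) := by
  have hu : ∀ x ∈ Set.uIcc (-1:ℝ) 1,
      HasDerivAt (fun x : ℝ => Real.exp (-(t - x)^2 / lam^2))
        ((2*(t-x)/lam^2) * Real.exp (-(t - x)^2 / lam^2)) x := fun x _ => exp_hasDeriv lam t x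
  have hv : ∀ x ∈ Set.uIcc (-1:ℝ) 1,
      HasDerivAt (fun x : ℝ => eval x p) (eval x (derivative p)) x :=
    fun x _ => p.hasDerivAt x
  have hiu : IntervalIntegrable (fun x : ℝ => (2*(t-x)/lam^2) * Real.exp (-(t - x)^2 / lam^2))
      MeasureTheory.volume (-1) 1 := by
    apply Continuous.intervalIntegrable
    apply Continuous.mul _ (by fun_prop)
    fun_prop
  have hiv : IntervalIntegrable (fun x : ℝ => eval x (derivative p))
      MeasureTheory.volume (-1) 1 :=
    (derivative p).continuous.intervalIntegrable _ _
  have h := intervalIntegral.integral_mul_deriv_eq_deriv_mul hu hv hiu hiv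
  rw [Jp, h]
  have ha : IntervalIntegrable (fun x : ℝ => t * (Real.exp (-(t - x)^2/lam^2) * eval x p))
      MeasureTheory.volume (-1) 1 := intJ lam t t p
  have hb : IntervalIntegrable (fun x : ℝ => 1 * (Real.exp (-(t - x)^2/lam^2) * eval x (X*p)))
      MeasureTheory.volume (-1) 1 := intJ lam t 1 (X*p)
  have hc : (∫ x in (-1:ℝ)..1, (2*(t-x)/lam^2) * Real.exp (-(t - x)^2 / lam^2) * eval x p)
      = ∫ x in (-1:ℝ)..1, (2/lam^2) * (t * (Real.exp (-(t - x)^2/lam^2) * eval x p)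
          - 1 * (Real.exp (-(t - x)^2/lam^2) * eval x (X*p))) := by
    apply intervalIntegral.integral_congr
    intro x _
    simp only [eval_mul, eval_X]
    ring
  rw [hc, intervalIntegral.integral_const_mul, intervalIntegral.integral_sub ha hb,
    intervalIntegral.integral_const_mul, intervalIntegral.integral_const_mul, Jp, Jp]
  rw [show (t - -1) = t + 1 by ring]
  ring

lemma Jp_comb (lam t c a b : ℝ) (p q r : ℝ[X])
    (h : ∀ x : ℝ, c * eval x p = a * eval x q + b * eval x r) :
    c * Jp lam t p = a * Jp lam t q + b * Jp lam t r := by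
  rw [Jp, Jp, Jp, ← intervalIntegral.integral_const_mul c, ← intervalIntegral.integral_const_mul a,
    ← intervalIntegral.integral_const_mul b,
    ← intervalIntegral.integral_add (intJ lam t a q) (intJ lam t b r)]
  apply intervalIntegral.integral_congr
  intro x _
  have hx := h x
  simp only
  linear_combination Real.exp (-(t - x) ^ 2 / lam ^ 2) * hx

/-- Five-term recurrence for `J_λ[P_n]`. -/
theorem Jlam_five_term_recurrence (lam t : ℝ) (hlam : 0 < lam) (n : ℕ) (hn : 1 ≤ n) :
    ((n + 2 : ℝ) / (2 * n + 3)) * Jlam lam (n + 2) t =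
      t * (Jlam lam (n + 1) t - Jlam lam (n - 1) t) +
        ((n - 1 : ℝ) / (2 * n - 1)) * Jlam lam (n - 2) t +
        (2 * n + 1) * (lam ^ 2 / 2 + 1 / ((2 * n + 3) * (2 * n - 1))) * Jlam lam n t := by
  obtain ⟨m, rfl⟩ : ∃ m, n = m + 1 := ⟨n - 1, (Nat.succ_pred_eq_of_pos hn).symm⟩
  have hidx1 : m + 1 - 1 = m := rfl
  have hidx2 : m + 1 - 2 = m - 1 := rfl
  rw [hidx1, hidx2]
  simp only [Jlam_eq_Jp]
  -- notation
  set u1 : ℝ := Real.exp (-(t - 1)^2 / lam^2) with hu1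
  set um1 : ℝ := Real.exp (-(t + 1)^2 / lam^2) with hum1
  have hl2 : (lam:ℝ)^2 ≠ 0 := pow_ne_zero 2 hlam.ne'
  -- E2 : from lpA (m+1)
  have hE2 : ((m:ℝ)+3) * Jp lam t (Lp (m+3)) =
      (2*(m:ℝ)+5) * Jp lam t (X * Lp (m+2)) + (-((m:ℝ)+2)) * Jp lam t (Lp (m+1)) := by
    apply Jp_comb
    intro x
    have h := congrArg (eval x) (lpA (m+1))
    simp only [show m+1+2 = m+3 from rfl, show m+1+1 = m+2 from rfl,
      eval_mul, eval_add, eval_sub, eval_natCast, eval_ofNat, eval_X, eval_one] at h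
    simp only [eval_mul, eval_X]
    push_cast at h ⊢
    linear_combination h
  -- E3
  have hE3 : (2*(m:ℝ)+1) * Jp lam t (X * Lp m) =
      ((m:ℝ)+1) * Jp lam t (Lp (m+1)) + (m:ℝ) * Jp lam t (Lp (m-1)) := by
    apply Jp_comb
    intro x
    cases m with
    | zero => simp [Lp0, Lp1]
    | succ k =>
        have h := congrArg (eval x) (lpA k)
        simp only [eval_mul, eval_add, eval_sub, eval_natCast, eval_ofNat, eval_X, eval_one] at h
        simp only [Nat.add_sub_cancel, show k+1+1 = k+2 from rfl, eval_mul, eval_X]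
        push_cast at h ⊢
        linear_combination -h
  -- B transferred
  have hcomb : (2*(m:ℝ)+3) * Jp lam t (Lp (m+1)) =
      (1:ℝ) * Jp lam t (derivative (Lp (m+2))) + (-1:ℝ) * Jp lam t (derivative (Lp m)) := by
    apply Jp_comb
    intro x
    have h := congrArg (eval x) (lpB m)
    simp only [eval_mul, eval_add, eval_sub, eval_natCast, eval_ofNat, eval_X, eval_one] at h
    push_cast at h ⊢
    linear_combination -h
  have h1 := Jp_deriv lam t (Lp (m+2))
  have h2 := Jp_deriv lam t (Lp m)
  rw [lpeval1, lpevalm1] at h1 h2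
  have hpow : ((-1:ℝ))^(m+2) = (-1)^m := by rw [pow_succ, pow_succ]; ring
  rw [hpow] at h1
  have h3 : (2/lam^2) * lam^2 = 2 := by field_simp
  have hE1 : lam^2 * ((2*(m:ℝ)+3) * Jp lam t (Lp (m+1))) =
      -2*(t * Jp lam t (Lp (m+2)) - Jp lam t (X * Lp (m+2)))
      + 2*(t * Jp lam t (Lp m) - Jp lam t (X * Lp m)) := by
    linear_combination lam^2 * hcomb + lam^2 * h1 - lam^2 * h2 -
      ((t * Jp lam t (Lp (m+2)) - Jp lam t (X * Lp (m+2)))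
        - (t * Jp lam t (Lp m) - Jp lam t (X * Lp m))) * h3
  push_cast
  have h35 : (2*(m:ℝ)+5) ≠ 0 := by positivity
  have h21 : (2*(m:ℝ)+1) ≠ 0 := by positivity
  simp only [show m+1+2 = m+3 from rfl, show m+1+1 = m+2 from rfl]
  rw [show ((m:ℝ)+1+2) = (m:ℝ)+3 by ring, show (2*((m:ℝ)+1)+3) = 2*(m:ℝ)+5 by ring,
    show ((m:ℝ)+1-1) = (m:ℝ) by ring, show (2*((m:ℝ)+1)-1) = 2*(m:ℝ)+1 by ring,
    show (2*((m:ℝ)+1)+1) = 2*(m:ℝ)+3 by ring]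
  field_simp
  linear_combination ((2*(2*(m:ℝ)+1))*hE2 - ((2*(m:ℝ)+5)*(2*(m:ℝ)+1))*hE1 + (2*(2*(m:ℝ)+5))*hE3)
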